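/- Let A > 0 and 0 < c ≤ A, and set θ = c/(2A − c) and α = e^{−c/2}. Let (a_j)_{j≥1} be a sequence of real numbers with |a_j| ≤ A for all j and limsup_{n→∞} (1/n)·Σ_{j=1}^{n} a_j < −c. Then there exists N₀ ∈ ℕ such that for every n ≥ N₀ there are at least θ·n integers m with 1 ≤ m ≤ n having the following property: Σ_{j=m−k+1}^{m} a_j ≤ k·log α (equivalently ≤ −(c/2)·k) for every 1 ≤ k ≤ m. -/

import Mathlib

open Filter Finset
open scoped Classical

theorem pliss_hyperbolic_times (A c : ℝ) (hA : 0 < A) (hc : 0 < c) (hcA : c ≤ A)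
    (a : ℕ → ℝ) (hbd : ∀ j, 1 ≤ j → |a j| ≤ A)
    (hls : Filter.limsup (fun n : ℕ => (∑ j ∈ Finset.Icc 1 n, a j) / n) Filter.atTop < -c) :
    ∃ N₀ : ℕ, ∀ n ≥ N₀,
      (c / (2 * A - c)) * n ≤
        ((Finset.Icc 1 n).filter (fun m =>
          ∀ k ∈ Finset.Icc 1 m,
            ∑ j ∈ Finset.Icc (m - k + 1) m, a j ≤ (k : ℝ) * (-(c/2)))).card := by
  classical
  set B : ℝ := A - c / 2 with hBdef
  have hBpos : 0 < B := by simp only [hBdef]; linarith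
  set P : ℕ → Prop := fun m =>
    ∀ k ∈ Finset.Icc 1 m,
      ∑ j ∈ Finset.Icc (m - k + 1) m, a j ≤ (k : ℝ) * (-(c/2)) with hPdef
  set T : ℕ → ℝ := fun n => (∑ j ∈ Finset.Ioc 0 n, a j) + (c / 2) * n with hTdef
  set L : ℕ → ℕ := fun n => ((Finset.Icc 1 n).filter P).card with hLdef
  -- key sum decomposition
  have hdiff : ∀ m k : ℕ, 1 ≤ k → k ≤ m →
      T m = T (m - k) + (∑ j ∈ Finset.Icc (m - k + 1) m, a j) + (c / 2) * k := by
    intro m k hk1 hkm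
    have hsplit : (∑ j ∈ Finset.Ioc 0 (m - k), a j) + ∑ j ∈ Finset.Ioc (m - k) m, a j
        = ∑ j ∈ Finset.Ioc 0 m, a j :=
      Finset.sum_Ioc_consecutive _ (Nat.zero_le _) (Nat.sub_le m k)
    have hcast : ((m - k : ℕ) : ℝ) = (m : ℝ) - (k : ℝ) := by
      have := Nat.cast_sub (R := ℝ) hkm; exact this
    rw [Finset.Icc_add_one_left_eq_Ioc]
    simp only [hTdef]
    rw [← hsplit, hcast]
    ring
  -- the main induction
  have key : ∀ n, ∀ i ≤ n, -B * (L n : ℝ) ≤ T i := by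
    intro n
    induction n with
    | zero =>
      intro i hi
      have : i = 0 := Nat.le_zero.mp hi
      subst this
      simp [hTdef, hLdef]
    | succ n ih =>
      have hmono : L n ≤ L (n + 1) := by
        apply Finset.card_le_card
        exact Finset.filter_subset_filter _ (Finset.Icc_subset_Icc_right (Nat.le_succ n))
      intro i hi
      rcases Nat.lt_succ_iff_lt_or_eq.mp (Nat.lt_succ_of_le hi) with h | h
      · have h' : i ≤ n := Nat.lt_succ_iff.mp h
        have := ih i h'
        have : -B * (L (n+1) : ℝ) ≤ -B * (L n : ℝ) := by
          apply mul_le_mul_of_nonpos_left _ (by linarith)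
          exact_mod_cast hmono
        linarith [ih i h']
      · subst h
        by_cases hp : P (n + 1)
        · -- record case
          have hins : Finset.Icc 1 (n + 1) = insert (n + 1) (Finset.Icc 1 n) := by
            ext x; simp [Nat.lt_succ_iff]; omega
          have hLsucc : L (n + 1) = L n + 1 := by
            simp only [hLdef, hins, Finset.filter_insert, if_pos hp]
            rw [Finset.card_insert_of_notMem (by simp)]
          have hstep : T (n + 1) = T n + a (n + 1) + c / 2 := by
            have := hdiff (n + 1) 1 le_rfl (Nat.le_add_left 1 n)
            simpa using this
          have hb : -A ≤ a (n + 1) := neg_le_of_abs_le (hbd (n + 1) (Nat.le_add_left 1 n))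
          have := ih n le_rfl
          rw [hLsucc, hstep]
          push_cast
          simp only [hBdef] at *
          linarith
        · -- not a record
          simp only [hPdef] at hp
          push_neg at hp
          obtain ⟨k, hk, hgt⟩ := hp
          rw [Finset.mem_Icc] at hk
          have heq := hdiff (n + 1) k hk.1 hk.2
          have hk0 : (0 : ℝ) ≤ (k : ℝ) := Nat.cast_nonneg k
          have hTi : T (n + 1 - k) < T (n + 1) := by
            rw [heq]; nlinarith
          have hle : n + 1 - k ≤ n := by omega
          have := ih (n + 1 - k) hle
          have hmono' : -B * (L (n+1) : ℝ) ≤ -B * (L n : ℝ) := by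
            apply mul_le_mul_of_nonpos_left _ (by linarith)
            exact_mod_cast hmono
          linarith
  -- eventually the averages are below -c
  have hbdd : Filter.IsBoundedUnder (· ≤ ·) Filter.atTop
      (fun n : ℕ => (∑ j ∈ Finset.Icc 1 n, a j) / n) := by
    apply Filter.isBoundedUnder_of
    refine ⟨A, fun n => ?_⟩
    rcases Nat.eq_zero_or_pos n with h0 | hpos
    · subst h0; simp [hA.le]
    · have hn : (0 : ℝ) < n := by exact_mod_cast hpos
      rw [div_le_iff₀ hn]
      calc ∑ j ∈ Finset.Icc 1 n, a j ≤ ∑ j ∈ Finset.Icc 1 n, A := by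
            apply Finset.sum_le_sum
            intro j hj
            rw [Finset.mem_Icc] at hj
            exact le_of_abs_le (hbd j hj.1)
        _ = A * n := by rw [Finset.sum_const, Nat.card_Icc]; simp; ring
  clear_value B T L
  have hev := Filter.eventually_lt_of_limsup_lt hls hbdd
  rw [Filter.eventually_atTop] at hev
  obtain ⟨N₁, hN₁⟩ := hev
  refine ⟨max N₁ 1, fun n hn => ?_⟩
  have hn1 : 1 ≤ n := le_trans (le_max_right _ _) hn
  have hnN : N₁ ≤ n := le_trans (le_max_left _ _) hn
  have hnpos : (0 : ℝ) < n := by exact_mod_cast hn1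
  have hSn : (∑ j ∈ Finset.Icc 1 n, a j) < -c * n := by
    have := hN₁ n hnN
    rw [div_lt_iff₀ hnpos] at this
    linarith
  have hIoc : Finset.Ioc 0 n = Finset.Icc 1 n := by
    ext x; simp only [Finset.mem_Ioc, Finset.mem_Icc]; omega
  have hST : (∑ j ∈ Finset.Ioc 0 n, a j) = ∑ j ∈ Finset.Icc 1 n, a j := by
    rw [hIoc]
  have hTn : T n ≤ -(c / 2) * n := by
    simp only [hTdef]; rw [hST]; linarith
  have hkey := key n n le_rfl
  have hmain : (c / 2) * (n : ℝ) ≤ B * (L n : ℝ) := by linarith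
  have h2B : 2 * A - c = 2 * B := by simp only [hBdef]; ring
  have hgoal : (c / (2 * A - c)) * (n : ℝ) ≤ (L n : ℝ) := by
    rw [h2B, div_mul_eq_mul_div, div_le_iff₀ (by linarith : (0:ℝ) < 2 * B)]
    nlinarith [Nat.cast_nonneg (α := ℝ) (L n)]
  refine le_trans hgoal (Nat.cast_le.mpr (le_of_eq ?_))
  simp only [hLdef]
  refine congrArg Finset.card (Finset.ext fun m => ?_)
  simp only [Finset.mem_filter, hPdef]
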